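/- Let G be an n-vertex graph that is B_t-free (contains no book B_t, i.e., t triangles sharing a common edge). Then for any r ≥ 3, the number of copies of K_r in G is at most C(t-2, r-3) · (number of triangles in G) / C(r,3). (In particular, any two adjacent vertices have at most t-1 common neighbors.) -/

import Mathlib

/-- The graph `G` contains a copy of the book `B_t`: vertices `u, v, w_1, ..., w_t`
with edges `uv`, `uw_i`, `vw_i` for all `i`. -/
def ContainsBook {V : Type*} (G : SimpleGraph V) (t : ℕ) : Prop :=
  ∃ (u v : V) (w : Fin t → V),
    Function.Injective w ∧ (∀ i, w i ≠ u) ∧ (∀ i, w i ≠ v) ∧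
    G.Adj u v ∧ (∀ i, G.Adj u (w i)) ∧ (∀ i, G.Adj v (w i))

/-- In a `B_t`-free graph, two adjacent vertices have at most `t - 1` common neighbors. -/
lemma common_nbhd_le {V : Type*} [Fintype V] [DecidableEq V] {t : ℕ}
    {G : SimpleGraph V} [DecidableRel G.Adj] (hfree : ¬ ContainsBook G t)
    {a b : V} (hab : G.Adj a b) :
    (G.neighborFinset a ∩ G.neighborFinset b).card ≤ t - 1 := by
  by_contra h
  push_neg at h
  have ht : t ≤ (G.neighborFinset a ∩ G.neighborFinset b).card := by omega
  obtain ⟨S, hS, hScard⟩ := Finset.exists_subset_card_eq ht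
  apply hfree
  refine ⟨a, b, fun i => (S.equivFin.symm (Fin.cast hScard.symm i) : V), ?_, ?_, ?_, hab, ?_, ?_⟩
  · intro i j hij
    have := S.equivFin.symm.injective (Subtype.ext hij)
    simpa [Fin.ext_iff] using congrArg Fin.val this
  all_goals
    intro i
    have hmem : ((S.equivFin.symm (Fin.cast hScard.symm i)) : V)
        ∈ G.neighborFinset a ∩ G.neighborFinset b :=
      hS (S.equivFin.symm (Fin.cast hScard.symm i)).2
    simp only [Finset.mem_inter, SimpleGraph.mem_neighborFinset] at hmem
  · exact hmem.1.ne'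
  · exact hmem.2.ne'
  · exact hmem.1
  · exact hmem.2

/-- If `G` is an `n`-vertex `B_t`-free graph and `r ≥ 3`, then the number of copies of
`K_r` in `G` is at most `C(t-2, r-3) · N(K_3, G) / C(r,3)`. -/
theorem cliques_le_of_bookFree {V : Type*} [Fintype V] [DecidableEq V]
    (t r : ℕ) (hr : 3 ≤ r) (G : SimpleGraph V) [DecidableRel G.Adj]
    (hfree : ¬ ContainsBook G t) :
    ((G.cliqueFinset r).card : ℝ) ≤
      ((t - 2).choose (r - 3) * (G.cliqueFinset 3).card : ℝ) / (r.choose 3) := by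
  have key : ∑ K ∈ G.cliqueFinset r, ((G.cliqueFinset 3).filter (· ⊆ K)).card
      = ∑ T ∈ G.cliqueFinset 3, ((G.cliqueFinset r).filter (T ⊆ ·)).card := by
    simp_rw [Finset.card_filter]
    rw [Finset.sum_comm]
  -- left side: each term equals r.choose 3
  have hleft : ∀ K ∈ G.cliqueFinset r,
      ((G.cliqueFinset 3).filter (· ⊆ K)).card = r.choose 3 := by
    intro K hK
    rw [SimpleGraph.mem_cliqueFinset_iff] at hK
    have : (G.cliqueFinset 3).filter (· ⊆ K) = K.powersetCard 3 := by
      ext T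
      simp only [Finset.mem_filter, SimpleGraph.mem_cliqueFinset_iff,
        Finset.mem_powersetCard]
      constructor
      · rintro ⟨hT, hTK⟩
        exact ⟨hTK, hT.2⟩
      · rintro ⟨hTK, hTcard⟩
        exact ⟨⟨hK.1.subset hTK, hTcard⟩, hTK⟩
    rw [this, Finset.card_powersetCard, hK.2]
  -- right side: each term ≤ (t-2).choose (r-3)
  have hright : ∀ T ∈ G.cliqueFinset 3,
      ((G.cliqueFinset r).filter (T ⊆ ·)).card ≤ (t - 2).choose (r - 3) := by
    intro T hT
    rw [SimpleGraph.mem_cliqueFinset_iff] at hT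
    obtain ⟨a, b, c, hab, hac, hbc, hTabc⟩ := Finset.card_eq_three.mp hT.2
    have ha : a ∈ T := by rw [hTabc]; simp
    have hb : b ∈ T := by rw [hTabc]; simp
    have hc : c ∈ T := by rw [hTabc]; simp
    have hadjab : G.Adj a b := hT.1 ha hb hab
    have hadjac : G.Adj a c := hT.1 ha hc hac
    have hadjbc : G.Adj b c := hT.1 hb hc hbc
    set N := (G.neighborFinset a ∩ G.neighborFinset b).erase c with hN
    have hNcard : N.card ≤ t - 2 := by
      have h1 := common_nbhd_le hfree hadjab
      have h2 : N.card ≤ (G.neighborFinset a ∩ G.neighborFinset b).card - 1 := by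
        rw [hN]
        have hcmem : c ∈ G.neighborFinset a ∩ G.neighborFinset b := by
          simp [hadjac, hadjbc]
        rw [Finset.card_erase_of_mem hcmem]
      omega
    calc ((G.cliqueFinset r).filter (T ⊆ ·)).card
        ≤ (N.powersetCard (r - 3)).card := by
          apply Finset.card_le_card_of_injOn (fun K => K \ T)
          · intro K hK
            simp only [Finset.coe_filter, Set.mem_setOf_eq, SimpleGraph.mem_cliqueFinset_iff] at hK
            obtain ⟨⟨hKcl, hKcard⟩, hTK⟩ := hK
            rw [Finset.mem_coe, Finset.mem_powersetCard]
            constructor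
            · intro x hx
              rw [Finset.mem_sdiff] at hx
              obtain ⟨hxK, hxT⟩ := hx
              have hxa : x ≠ a := fun h => hxT (h ▸ ha)
              have hxb : x ≠ b := fun h => hxT (h ▸ hb)
              have hxc : x ≠ c := fun h => hxT (h ▸ hc)
              have hxadja : G.Adj a x := hKcl (hTK ha) hxK (Ne.symm hxa)
              have hxadjb : G.Adj b x := hKcl (hTK hb) hxK (Ne.symm hxb)
              rw [hN, Finset.mem_erase, Finset.mem_inter]
              exact ⟨hxc, by simpa using hxadja, by simpa using hxadjb⟩
            · rw [Finset.card_sdiff_of_subset hTK, hKcard, hT.2]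
          · intro K₁ hK₁ K₂ hK₂ hK
            simp only [Finset.coe_filter, Set.mem_setOf_eq] at hK₁ hK₂
            have e1 := Finset.sdiff_union_of_subset hK₁.2
            have e2 := Finset.sdiff_union_of_subset hK₂.2
            simp only at hK
            rw [← e1, ← e2, hK]
      _ ≤ (t - 2).choose (r - 3) := by
          rw [Finset.card_powersetCard]
          exact Nat.choose_le_choose _ hNcard
  have hcount : r.choose 3 * (G.cliqueFinset r).card
      ≤ (t - 2).choose (r - 3) * (G.cliqueFinset 3).card := by
    calc r.choose 3 * (G.cliqueFinset r).card
        = ∑ K ∈ G.cliqueFinset r, ((G.cliqueFinset 3).filter (· ⊆ K)).card := by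
          rw [Finset.sum_congr rfl hleft, Finset.sum_const, smul_eq_mul, mul_comm]
      _ = ∑ T ∈ G.cliqueFinset 3, ((G.cliqueFinset r).filter (T ⊆ ·)).card := key
      _ ≤ ∑ T ∈ G.cliqueFinset 3, (t - 2).choose (r - 3) :=
          Finset.sum_le_sum hright
      _ = (t - 2).choose (r - 3) * (G.cliqueFinset 3).card := by
          rw [Finset.sum_const, smul_eq_mul, mul_comm]
  have hpos : (0 : ℝ) < (r.choose 3 : ℝ) := by
    exact_mod_cast Nat.choose_pos hr
  rw [le_div_iff₀ hpos]
  calc ((G.cliqueFinset r).card : ℝ) * (r.choose 3 : ℝ)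
      = ((r.choose 3 * (G.cliqueFinset r).card : ℕ) : ℝ) := by push_cast; ring
    _ ≤ (((t - 2).choose (r - 3) * (G.cliqueFinset 3).card : ℕ) : ℝ) := by
        exact_mod_cast hcount
    _ = ((t - 2).choose (r - 3) * (G.cliqueFinset 3).card : ℝ) := by push_cast; ring
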